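/- Let G be the K×N generator matrix of an (N,K) extended Reed-Solomon code over F_{2^n} (N = 2^n), P an invertible N×N binary permutation matrix, E an invertible K×K matrix, G_p = F^{⊗n} the polar transform, M = E·G·P^{-1}·G_p, a = ⌈-log₂(K/N)⌉, and D = {2^a−1, 2·2^a−1, ..., 2^n−1}. Then the 2^{n-a} columns of M indexed by D are linearly independent, i.e., rank(M^D) = 2^{n-a}. -/

import Mathlib

open Matrix

/-- The `t`-th binary digit of `i`, as an element of `Fin 2`. -/
def bit (t i : ℕ) : Fin 2 := ⟨i / 2 ^ t % 2, Nat.mod_lt _ (by norm_num)⟩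

/-- The Arıkan kernel `F = [[1,0],[1,1]]` over a commutative semiring. -/
def arikanKernel (R : Type*) [CommSemiring R] : Matrix (Fin 2) (Fin 2) R := !![1, 0; 1, 1]

/-- The polar transform `G_p = F^{⊗n}`, a `2^n × 2^n` matrix with `0/1` entries,
embedded in the ring `R`. -/
def polarG (R : Type*) [CommSemiring R] (n : ℕ) : Matrix (Fin (2 ^ n)) (Fin (2 ^ n)) R :=
  fun i j => ∏ t ∈ Finset.range n, arikanKernel R (bit t i.val) (bit t j.val)

/-- The `j`-th element of `D = {2^a − 1, 2·2^a − 1, …, 2^n − 1}`, namely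
`(j+1)·2^a − 1 = j·2^a + (2^a − 1)`, as an element of `Fin (2^n)`. -/
def dIdx {n a : ℕ} (ha : a ≤ n) (j : Fin (2 ^ (n - a))) : Fin (2 ^ n) :=
  ⟨j.val * 2 ^ a + (2 ^ a - 1), by
    have hj := j.isLt
    have h2 : 0 < 2 ^ a := pow_pos (by norm_num) a
    have h3 : (j.val + 1) * 2 ^ a ≤ 2 ^ n := by
      calc (j.val + 1) * 2 ^ a ≤ 2 ^ (n - a) * 2 ^ a := Nat.mul_le_mul_right _ hj
        _ = 2 ^ n := by rw [← pow_add, Nat.sub_add_cancel ha]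
    have h4 : j.val * 2 ^ a + 2 ^ a = (j.val + 1) * 2 ^ a := by ring
    omega⟩

section Aux

lemma bit_val (t i : ℕ) : (bit t i).val = i / 2 ^ t % 2 := rfl

lemma bit_eq_one_iff {t i : ℕ} : bit t i = 1 ↔ i.testBit t = true := by
  rw [Nat.testBit_eq_decide_div_mod_eq, decide_eq_true_iff, Fin.ext_iff, bit_val, Fin.val_one]

lemma bit_eq_zero_iff {t i : ℕ} : bit t i = 0 ↔ i.testBit t = false := by
  have h2 : i / 2 ^ t % 2 < 2 := Nat.mod_lt _ (by norm_num)
  rw [Nat.testBit_eq_decide_div_mod_eq, decide_eq_false_iff_not, Fin.ext_iff, bit_val, Fin.val_zero]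
  omega

lemma arikan_diag (R : Type*) [CommSemiring R] (x : Fin 2) : arikanKernel R x x = 1 := by
  fin_cases x <;> simp [arikanKernel]

lemma polarG_diag (R : Type*) [CommSemiring R] {n : ℕ} (i : Fin (2 ^ n)) :
    polarG R n i i = 1 :=
  Finset.prod_eq_one fun t _ => arikan_diag R _

lemma polarG_eq_zero (R : Type*) [CommSemiring R] {n : ℕ} {i j : Fin (2 ^ n)} {t : ℕ}
    (ht : t < n) (hi : i.val.testBit t = false) (hj : j.val.testBit t = true) :
    polarG R n i j = 0 := by
  refine Finset.prod_eq_zero (Finset.mem_range.mpr ht) ?_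
  rw [bit_eq_zero_iff.mpr hi, bit_eq_one_iff.mpr hj]
  simp [arikanKernel]

lemma testBit_dIdx {n a : ℕ} (ha : a ≤ n) (j : Fin (2 ^ (n - a))) (t : ℕ) :
    (dIdx ha j).val.testBit t = if t < a then true else j.val.testBit (t - a) := by
  show (j.val * 2 ^ a + (2 ^ a - 1)).testBit t = _
  rw [mul_comm, Nat.testBit_two_pow_mul_add _ (by have := Nat.two_pow_pos a; omega)]
  by_cases h : t < a <;> simp [h]

lemma dIdx_injective {n a : ℕ} (ha : a ≤ n) : Function.Injective (dIdx ha) := by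
  intro j₁ j₂ h
  have h2 : 0 < 2 ^ a := Nat.two_pow_pos a
  have hv : j₁.val * 2 ^ a + (2 ^ a - 1) = j₂.val * 2 ^ a + (2 ^ a - 1) :=
    congrArg Fin.val h
  have : j₁.val * 2 ^ a = j₂.val * 2 ^ a := by omega
  exact Fin.ext (Nat.eq_of_mul_eq_mul_right h2 this)

lemma exists_testBit_lt {m j : ℕ} (h : m < j) :
    ∃ s, m.testBit s = false ∧ j.testBit s = true := by
  by_contra hc
  push_neg at hc
  have hand : j &&& m = j := Nat.eq_of_testBit_eq fun s => by
    rw [Nat.testBit_and]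
    cases hjs : j.testBit s
    · simp
    · cases hms : m.testBit s
      · exact absurd hjs (by simpa using hc s hms)
      · simp
  have : j ≤ m := hand ▸ Nat.and_le_right
  omega

lemma mem_dIdx {n a : ℕ} (ha : a ≤ n) (i : Fin (2 ^ n))
    (h : ∀ t < a, i.val.testBit t = true) : ∃ m, dIdx ha m = i := by
  have h2 : 0 < 2 ^ a := Nat.two_pow_pos a
  have hlt : i.val / 2 ^ a < 2 ^ (n - a) := by
    apply Nat.div_lt_of_lt_mul
    calc i.val < 2 ^ n := i.isLt
      _ = 2 ^ a * 2 ^ (n - a) := by rw [← pow_add]; congr 1; omega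
  refine ⟨⟨i.val / 2 ^ a, hlt⟩, Fin.ext ?_⟩
  have hmod : i.val % 2 ^ a = 2 ^ a - 1 := by
    apply Nat.eq_of_testBit_eq
    intro t
    rw [Nat.testBit_mod_two_pow, Nat.testBit_two_pow_sub_one]
    by_cases ht : t < a
    · simp [ht, h t ht]
    · simp [ht]
  have := Nat.div_add_mod i.val (2 ^ a)
  have hcomm : i.val / 2 ^ a * 2 ^ a = 2 ^ a * (i.val / 2 ^ a) := Nat.mul_comm _ _
  show i.val / 2 ^ a * 2 ^ a + (2 ^ a - 1) = i.val
  omega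

lemma permMatrix_mulVec {m : Type*} [Fintype m] [DecidableEq m] {R : Type*} [CommRing R]
    (σ : Equiv.Perm m) (w : m → R) (i : m) :
    (σ.permMatrix R).mulVec w i = w (σ i) := by
  simp only [Matrix.mulVec, dotProduct, Equiv.Perm.permMatrix,
    PEquiv.toMatrix_apply, Equiv.toPEquiv_apply, Option.mem_def, Option.some.injEq]
  rw [Finset.sum_eq_single (σ i)] <;> simp +contextual [eq_comm]

lemma mul_submatrix_id {l m o p : Type*} [Fintype m] {R : Type*} [CommRing R]
    (X : Matrix l m R) (Y : Matrix m o R) (f : p → o) :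
    (X * Y).submatrix id f = X * Y.submatrix id f := by
  ext i j
  simp [Matrix.mul_apply]

end Aux

/-- Let `G` be the `K × 2^n` generator matrix of an `(N = 2^n, K)` extended Reed–Solomon
code over `F_{2^n}` (so that every `K` columns of `G` are linearly independent),
`P` the permutation matrix of a permutation `σ`, `E` an invertible `K×K` matrix,
`G_p = F^{⊗n}` the polar transform, `M = E·G·P⁻¹·G_p`, `a = ⌈−log₂(K/N)⌉ = n − ⌊log₂ K⌋`,
and `D = {2^a−1, 2·2^a−1, …, 2^n−1}`.  Then the `2^{n−a}` columns of `M` indexed by `D`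
are linearly independent, i.e. `rank (M^D) = 2^{n−a}`. -/
theorem rank_pretransformed_submatrix {n K : ℕ} (hK1 : 1 ≤ K) (hKN : K ≤ 2 ^ n)
    (Fq : Type*) [Field Fq] [Fintype Fq] [DecidableEq Fq]
    (hcard : Fintype.card Fq = 2 ^ n)
    (G : Matrix (Fin K) (Fin (2 ^ n)) Fq)
    (hMDS : ∀ s : Finset (Fin (2 ^ n)), s.card = K →
      LinearIndependent Fq (fun j : s => fun i => G i (j : Fin (2 ^ n))))
    (σ : Equiv.Perm (Fin (2 ^ n)))
    (E : Matrix (Fin K) (Fin K) Fq) (hE : IsUnit E)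
    (a : ℕ) (ha : a = n - Nat.log 2 K)
    (M : Matrix (Fin K) (Fin (2 ^ n)) Fq)
    (hM : M = E * G * (σ.permMatrix Fq)⁻¹ * polarG Fq n) :
    (M.submatrix id (dIdx (show a ≤ n by omega))).rank = 2 ^ (n - a) := by
  have haN : a ≤ n := by omega
  -- numerology: 2^(n-a) ≤ K
  have hlogK : Nat.log 2 K ≤ n := by
    have := Nat.log_mono_right (b := 2) hKN
    rwa [Nat.log_pow (by norm_num)] at this
  have h2na : 2 ^ (n - a) ≤ K := by
    have : n - a = Nat.log 2 K := by omega
    rw [this]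
    exact Nat.pow_log_le_self 2 (by omega)
  -- the permutation matrix is invertible
  have hPdet : IsUnit (σ.permMatrix Fq).det := by
    rw [Matrix.det_permutation]
    rcases Int.units_eq_one_or (Equiv.Perm.sign σ) with h | h <;> rw [h] <;> simp
  -- the key injectivity statement
  have hinj : Function.Injective (M.submatrix id (dIdx haN)).mulVecLin := by
    rw [← LinearMap.ker_eq_bot, LinearMap.ker_eq_bot']
    intro c hc
    rw [Matrix.mulVecLin_apply] at hc
    have hc' : E *ᵥ (G *ᵥ ((σ.permMatrix Fq)⁻¹ *ᵥ
        ((polarG Fq n).submatrix id (dIdx haN) *ᵥ c))) = 0 := by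
      rw [Matrix.mulVec_mulVec, Matrix.mulVec_mulVec, Matrix.mulVec_mulVec,
        ← mul_submatrix_id, ← hM]
      exact hc
    have hGv0 : G *ᵥ ((σ.permMatrix Fq)⁻¹ *ᵥ
        ((polarG Fq n).submatrix id (dIdx haN) *ᵥ c)) = 0 := by
      apply Matrix.mulVec_injective_iff_isUnit.mpr hE
      rw [Matrix.mulVec_zero]
      exact hc'
    set v : Fin (2 ^ n) → Fq := (polarG Fq n).submatrix id (dIdx haN) *ᵥ c with hv
    set w : Fin (2 ^ n) → Fq := (σ.permMatrix Fq)⁻¹ *ᵥ v with hw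
    have hGw : G.mulVec w = 0 := hGv0
    have hvw : ∀ i, v i = w (σ i) := by
      intro i
      have : (σ.permMatrix Fq).mulVec w = v := by
        rw [hw, Matrix.mulVec_mulVec, Matrix.mul_nonsing_inv _ hPdet, Matrix.one_mulVec]
      rw [← this]
      exact permMatrix_mulVec σ w i
    -- support of v
    set S : Finset (Fin (2 ^ n)) := Finset.image (dIdx haN) Finset.univ with hS
    have hScard : S.card = 2 ^ (n - a) := by
      rw [hS, Finset.card_image_of_injective _ (dIdx_injective haN), Finset.card_univ,
        Fintype.card_fin]
    have hsupp : ∀ i, i ∉ S → v i = 0 := by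
      intro i hiS
      by_cases hbits : ∀ t < a, i.val.testBit t = true
      · exact absurd (Finset.mem_image.mpr (by
          obtain ⟨m, hm⟩ := mem_dIdx haN i hbits
          exact ⟨m, Finset.mem_univ m, hm⟩)) hiS
      · push_neg at hbits
        obtain ⟨t, hta, htb⟩ := hbits
        rw [hv]
        show ∑ j, ((polarG Fq n).submatrix id (dIdx haN)) i j * c j = 0
        apply Finset.sum_eq_zero
        intro j _
        rw [Matrix.submatrix_apply, id_eq,
          polarG_eq_zero Fq (lt_of_lt_of_le hta haN)
            (by simpa using htb) (by rw [testBit_dIdx]; simp [hta]), zero_mul]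
    -- support of w
    set T : Finset (Fin (2 ^ n)) := Finset.image σ S with hT
    have hTcard : T.card = 2 ^ (n - a) := by
      rw [hT, Finset.card_image_of_injective _ σ.injective, hScard]
    have hwsupp : ∀ i, i ∉ T → w i = 0 := by
      intro i hiT
      have : σ⁻¹ i ∉ S := fun hmem => hiT (Finset.mem_image.mpr ⟨σ⁻¹ i, hmem, by simp⟩)
      have := hsupp _ this
      rwa [hvw (σ⁻¹ i), ← Equiv.Perm.mul_apply, mul_inv_cancel, Equiv.Perm.one_apply] at this
    -- enlarge support to a set of size K and use MDS
    obtain ⟨s, hTs, hscard⟩ := Finset.exists_superset_card_eq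
      (hTcard ▸ h2na) (by simpa using hKN)
    have hwz : ∀ i, w i = 0 := by
      have hli := hMDS s hscard
      rw [Fintype.linearIndependent_iff] at hli
      have hsum : ∑ j : s, w j • (fun i => G i (j : Fin (2 ^ n))) = 0 := by
        funext i
        have : (∑ j : s, w j • (fun i => G i (j : Fin (2 ^ n)))) i
            = ∑ j ∈ s, w j * G i j := by
          rw [Finset.sum_apply]
          simp only [Pi.smul_apply, smul_eq_mul]
          exact (Finset.sum_attach s fun j => w j * G i j)
        rw [this]
        have hext : ∑ j ∈ s, w j * G i j = ∑ j, w j * G i j := by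
          apply Finset.sum_subset (Finset.subset_univ s)
          intro j _ hjs
          rw [hwsupp j (fun hjT => hjs (hTs hjT)), zero_mul]
        rw [hext]
        have := congrFun hGw i
        rw [Matrix.mulVec, dotProduct] at this
        simpa [mul_comm] using this
      intro i
      by_cases his : i ∈ s
      · exact hli (fun j => w j) hsum ⟨i, his⟩
      · exact hwsupp i (fun hiT => his (hTs hiT))
    have hvz : ∀ i, v i = 0 := fun i => by rw [hvw i]; exact hwz (σ i)
    -- the unitriangular system forces c = 0
    set Tm : Matrix (Fin (2 ^ (n - a))) (Fin (2 ^ (n - a))) Fq :=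
      fun m j => polarG Fq n (dIdx haN m) (dIdx haN j) with hTm
    have hTri : Tm.BlockTriangular OrderDual.toDual := by
      intro m j hmj
      have hmj' : m < j := hmj
      obtain ⟨t, htm, htj⟩ := exists_testBit_lt (show m.val < j.val from hmj')
      have htlt : t < n - a := by
        by_contra hc'
        have : j.val < 2 ^ t :=
          lt_of_lt_of_le j.isLt (Nat.pow_le_pow_right (by norm_num) (by omega))
        rw [Nat.testBit_lt_two_pow this] at htj
        exact absurd htj (by simp)
      refine polarG_eq_zero Fq (t := t + a) (by omega) ?_ ?_
      · rw [testBit_dIdx]; simpa [show ¬ t + a < a by omega] using htm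
      · rw [testBit_dIdx]; simpa [show ¬ t + a < a by omega] using htj
    have hTdet : IsUnit Tm.det := by
      rw [Matrix.det_of_lowerTriangular _ hTri]
      have : ∀ m, Tm m m = 1 := fun m => polarG_diag Fq _
      simp [this]
    have hTc : Tm.mulVec c = 0 := by
      funext m
      have := hvz (dIdx haN m)
      rw [hv] at this
      show ∑ j, Tm m j * c j = 0
      rw [Matrix.mulVec, dotProduct] at this
      simpa [Tm] using this
    have := Matrix.mulVec_injective_iff_isUnit.mpr
      ((Matrix.isUnit_iff_isUnit_det Tm).mpr hTdet) (a₁ := c) (a₂ := 0)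
    rw [Matrix.mulVec_zero] at this
    exact this hTc
  -- conclude about the rank
  rw [Matrix.rank, LinearMap.finrank_range_of_inj hinj]
  simp [Module.finrank_pi]
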